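/- The function f(t) = 4·arctan((t−1)/(t+1)) − 3(t²−1)/(t² + t + 1) is strictly increasing and strictly positive on the interval (1, ∞). -/

import Mathlib

open Real

lemma key_deriv (t : ℝ) (ht : 1 ≤ t) :
    HasDerivAt (fun t : ℝ => 4 * Real.arctan ((t - 1) / (t + 1)) - 3 * (t ^ 2 - 1) / (t ^ 2 + t + 1))
      ((t - 1) ^ 4 / ((t ^ 2 + 1) * (t ^ 2 + t + 1) ^ 2)) t := by
  have h1 : (t + 1) ≠ 0 := by nlinarith
  have h2 : (t ^ 2 + t + 1) ≠ 0 := by nlinarith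
  have hu : HasDerivAt (fun t : ℝ => (t - 1) / (t + 1))
      ((1 * (t + 1) - (t - 1) * 1) / (t + 1) ^ 2) t :=
    HasDerivAt.div ((hasDerivAt_id t).sub_const 1) ((hasDerivAt_id t).add_const 1) h1
  have ha : HasDerivAt (fun t : ℝ => 4 * Real.arctan ((t - 1) / (t + 1)))
      (4 * (1 / (1 + ((t - 1) / (t + 1)) ^ 2) * ((1 * (t + 1) - (t - 1) * 1) / (t + 1) ^ 2))) t :=
    hu.arctan.const_mul 4
  have hb : HasDerivAt (fun t : ℝ => 3 * (t ^ 2 - 1) / (t ^ 2 + t + 1))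
      ((3 * (2 * t ^ 1) * (t ^ 2 + t + 1) - 3 * (t ^ 2 - 1) * (2 * t ^ 1 + 1)) / (t ^ 2 + t + 1) ^ 2) t := by
    apply HasDerivAt.div
    · exact ((hasDerivAt_pow 2 t).sub_const 1).const_mul 3
    · exact ((hasDerivAt_pow 2 t).add ((hasDerivAt_id t))).add_const 1
    · exact h2
  have := ha.sub hb
  convert this using 1 <;> try rfl
  have h3 : (t : ℝ) ^ 2 + 1 ≠ 0 := by nlinarith
  have h4 : 1 + ((t - 1) / (t + 1)) ^ 2 ≠ 0 := by positivity
  field_simp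
  ring

theorem stmt_14 :
    StrictMonoOn
        (fun t : ℝ => 4 * Real.arctan ((t - 1) / (t + 1)) - 3 * (t ^ 2 - 1) / (t ^ 2 + t + 1))
        (Set.Ioi (1 : ℝ)) ∧
      ∀ t ∈ Set.Ioi (1 : ℝ),
        0 < 4 * Real.arctan ((t - 1) / (t + 1)) - 3 * (t ^ 2 - 1) / (t ^ 2 + t + 1) := by
  set f := fun t : ℝ => 4 * Real.arctan ((t - 1) / (t + 1)) - 3 * (t ^ 2 - 1) / (t ^ 2 + t + 1)
  have hmono : StrictMonoOn f (Set.Ici (1 : ℝ)) := by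
    apply strictMonoOn_of_deriv_pos (convex_Ici 1)
    · exact fun x hx => ((key_deriv x hx).continuousAt).continuousWithinAt
    · intro x hx
      rw [interior_Ici] at hx
      rw [(key_deriv x hx.le).deriv]
      have hx1 : (0:ℝ) < x - 1 := by simpa using sub_pos.mpr (Set.mem_Ioi.mp hx)
      have hd1 : (0:ℝ) < x ^ 2 + 1 := by positivity
      have hd2 : (0:ℝ) < (x ^ 2 + x + 1) ^ 2 := by nlinarith
      exact div_pos (pow_pos hx1 4) (mul_pos hd1 hd2)
  constructor
  · exact hmono.mono Set.Ioi_subset_Ici_self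
  · intro t ht
    have h0 : f 1 = 0 := by
      simp only [f]
      norm_num
    have := hmono (Set.self_mem_Ici) (Set.Ioi_subset_Ici_self ht) ht
    rw [h0] at this
    exact this
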